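/- Let S̃ be the matrix obtained from S by removing its first row and first column. There exists a sequence v = (v_i)_{i≥1} with 0 < v_i ≤ 1 for all i ≥ 1 and v_i = Σ_{j≥1} S̃_{i,j} v_j for all i ≥ 1 (i.e. S̃v = v) if and only if Π_{i=1}^{∞} p_i > 0. (Equivalently, the irreducible aperiodic Markov chain with transition matrix S is transient if and only if Π_{i=1}^{∞} p_i > 0.) -/

import Mathlib

/-- Fibonacci sequence with `F 0 = 1`, `F 1 = 2`, `F (n+2) = F (n+1) + F n`. -/
def fibF : ℕ → ℕ
  | 0 => 1
  | 1 => 2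
  | (n+2) => fibF (n+1) + fibF n

lemma fibF_pos : ∀ n, 0 < fibF n
  | 0 => by simp [fibF]
  | 1 => by simp [fibF]
  | (n+2) => by
      have h1 := fibF_pos (n+1)
      simp only [fibF]
      omega

/-- Zeckendorf digits of `N` in the base `fibF`: `N = ∑ i, zeck N i * fibF i`,
with `zeck N i ∈ {0,1}` and no two consecutive `1`'s. -/
def zeck (N i : ℕ) : ℕ :=
  if h : N = 0 then 0
  else if i = Nat.findGreatest (fun j => fibF j ≤ N) N then 1
  else zeck (N - fibF (Nat.findGreatest (fun j => fibF j ≤ N) N)) i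
termination_by N
decreasing_by
  exact Nat.sub_lt (Nat.pos_of_ne_zero h) (fibF_pos _)

lemma zeck_eq_zero_of_lt : ∀ N, ∀ i, N < i → zeck N i = 0 := by
  intro N
  induction N using Nat.strong_induction_on with
  | _ N ih =>
    intro i hi
    rw [zeck]
    split
    · rfl
    · rename_i h
      have hkN : Nat.findGreatest (fun j => fibF j ≤ N) N ≤ N := Nat.findGreatest_le N
      rw [if_neg (by omega)]
      exact ih _ (Nat.sub_lt (Nat.pos_of_ne_zero h) (fibF_pos _)) i
        (lt_of_le_of_lt (Nat.sub_le _ _) hi)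

lemma exists_break0 (N : ℕ) : ∃ i, ¬(zeck N (2*i+1) = 1 ∧ zeck N (2*i) = 0) := by
  refine ⟨N + 1, ?_⟩
  have h : zeck N (2*(N+1)+1) = 0 := zeck_eq_zero_of_lt N _ (by omega)
  simp [h]

lemma exists_break1 (N : ℕ) : ∃ i, ¬(zeck N (2*i+2) = 1 ∧ zeck N (2*i+1) = 0) := by
  refine ⟨N + 1, ?_⟩
  have h : zeck N (2*(N+1)+2) = 0 := zeck_eq_zero_of_lt N _ (by omega)
  simp [h]

/-- The number `s` of `10`-blocks carried in the stochastic Fibonacci adding machine: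
if the digits of `N` end with `00(10)^s` (case `ε₀ = 0`) or with `00(10)^s1`
(case `ε₀ = 1`), this returns `s`. -/
def carryLen (N : ℕ) : ℕ :=
  if zeck N 0 = 0 then Nat.find (exists_break0 N) else Nat.find (exists_break1 N)

/-- `Pprod p t = p 1 * p 2 * ⋯ * p t`. -/
def Pprod (p : ℕ → ℝ) (t : ℕ) : ℝ := ∏ i ∈ Finset.Icc 1 t, p i

/-- The transition matrix `S` of the Fibonacci stochastic adding machine associated to
the probability sequence `p`:  `S N N = 1 - p 1`;  if the digits of `N` end with
`00(10)^s` then `S N (N+1) = p 1 ⋯ p (s+1)` and `S N (N+1-F (2m)) = p 1 ⋯ p m * (1 - p (m+1))`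
for `1 ≤ m ≤ s`;  if the digits of `N` end with `00(10)^s1` then
`S N (N+1) = p 1 ⋯ p (s+2)` and `S N (N+1-F (2m-1)) = p 1 ⋯ p m * (1 - p (m+1))` for
`1 ≤ m ≤ s+1`;  all other entries vanish. -/
noncomputable def Smat (p : ℕ → ℝ) (N M : ℕ) : ℝ :=
  (if M = N then 1 - p 1 else 0) +
  if zeck N 0 = 0 then
    (if M = N + 1 then Pprod p (carryLen N + 1) else 0) +
    ∑ m ∈ Finset.Icc 1 (carryLen N),
      (if M = N + 1 - fibF (2*m) then Pprod p m * (1 - p (m+1)) else 0)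
  else
    (if M = N + 1 then Pprod p (carryLen N + 2) else 0) +
    ∑ m ∈ Finset.Icc 1 (carryLen N + 1),
      (if M = N + 1 - fibF (2*m - 1) then Pprod p m * (1 - p (m+1)) else 0)
/-! ### Auxiliary development -/

def Kz (N : ℕ) : ℕ := Nat.findGreatest (fun j => fibF j ≤ N) N

lemma Kz_def (N : ℕ) : Nat.findGreatest (fun j => fibF j ≤ N) N = Kz N := rfl

lemma fibF_add (n : ℕ) : fibF (n+2) = fibF (n+1) + fibF n := rfl

lemma fibF_lt_succ : ∀ n, fibF n < fibF (n+1)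
  | 0 => by simp [fibF]
  | (n+1) => by rw [fibF_add]; have := fibF_pos n; omega

lemma fibF_strictMono : StrictMono fibF := strictMono_nat_of_lt_succ fibF_lt_succ

lemma fibF_mono : Monotone fibF := fibF_strictMono.monotone

lemma lt_fibF : ∀ n, n < fibF n
  | 0 => by simp [fibF]
  | (n+1) => lt_of_le_of_lt (Nat.succ_le_of_lt (lt_fibF n)) (fibF_lt_succ n)

lemma Kz_le (N : ℕ) : Kz N ≤ N := Nat.findGreatest_le N

lemma fibF_Kz_le {N : ℕ} (hN : N ≠ 0) : fibF (Kz N) ≤ N := by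
  rw [← Kz_def]
  exact Nat.findGreatest_spec (P := fun j => fibF j ≤ N) (n := N) (m := 0) (Nat.zero_le N)
    (show fibF 0 ≤ N from Nat.one_le_iff_ne_zero.mpr hN)

lemma lt_fibF_Kz_succ (N : ℕ) : N < fibF (Kz N + 1) := by
  by_contra h
  push_neg at h
  have h1 : Kz N + 1 ≤ N := le_trans (le_of_lt (lt_fibF _)) h
  have h2 := Nat.le_findGreatest (P := fun j => fibF j ≤ N) h1 h
  rw [Kz_def] at h2
  omega

lemma Kz_eq {k N : ℕ} (h1 : fibF k ≤ N) (h2 : N < fibF (k+1)) : Kz N = k := by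
  have hN : N ≠ 0 := by have := fibF_pos k; omega
  have hub : Kz N ≤ k := by
    by_contra h
    push_neg at h
    have h3 : fibF (k+1) ≤ fibF (Kz N) := fibF_mono h
    have h4 := fibF_Kz_le hN
    omega
  have hlb : k ≤ Kz N := by
    have h5 := Nat.le_findGreatest (P := fun j => fibF j ≤ N)
      (le_trans (le_of_lt (lt_fibF k)) h1) h1
    rw [Kz_def] at h5
    exact h5
  omega

lemma zeck_zero (i : ℕ) : zeck 0 i = 0 := by rw [zeck]; simp

lemma zeck_Kz {N : ℕ} (hN : N ≠ 0) : zeck N (Kz N) = 1 := by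
  rw [zeck, dif_neg hN, Kz_def, if_pos rfl]

lemma zeck_of_ne {N i : ℕ} (hN : N ≠ 0) (hi : i ≠ Kz N) :
    zeck N i = zeck (N - fibF (Kz N)) i := by
  conv_lhs => rw [zeck]
  rw [dif_neg hN, Kz_def, if_neg hi]

lemma zeck_of_fibF_gt : ∀ N, ∀ i, N < fibF i → zeck N i = 0 := by
  intro N
  induction N using Nat.strong_induction_on with
  | _ N ih =>
    intro i hi
    rcases eq_or_ne N 0 with rfl | hN
    · exact zeck_zero i
    · have hKz : i ≠ Kz N := by
        intro h
        have := fibF_Kz_le hN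
        rw [← h] at this
        omega
      rw [zeck_of_ne hN hKz]
      exact ih _ (Nat.sub_lt (Nat.pos_of_ne_zero hN) (fibF_pos _)) i
        (lt_of_le_of_lt (Nat.sub_le _ _) hi)

lemma zeck_of_Kz_lt {N i : ℕ} (h : Kz N < i) : zeck N i = 0 :=
  zeck_of_fibF_gt N i (lt_of_lt_of_le (lt_fibF_Kz_succ N) (fibF_mono h))

lemma lt_fibF_of_digits {N d : ℕ} (h : ∀ i, d < i → zeck N i = 0) : N < fibF (d+1) := by
  by_contra hc
  push_neg at hc
  have hN : N ≠ 0 := by have := fibF_pos (d+1); omega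
  have hK : d < Kz N := by
    by_contra hK
    push_neg at hK
    have := lt_of_lt_of_le (lt_fibF_Kz_succ N) (fibF_mono (by omega : Kz N + 1 ≤ d + 1))
    omega
  exact absurd (zeck_Kz hN) (by rw [h _ hK]; omega)

lemma zeck_fib_add {k M : ℕ} (hM : M < fibF k) :
    ∀ i, zeck (fibF (k+1) + M) i = if i = k+1 then 1 else zeck M i := by
  have hne : fibF (k+1) + M ≠ 0 := by have := fibF_pos (k+1); omega
  have hK : Kz (fibF (k+1) + M) = k+1 :=
    Kz_eq (Nat.le_add_right _ _) (by rw [fibF_add]; omega)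
  intro i
  by_cases hi : i = k+1
  · rw [if_pos hi, hi]
    have h1 := zeck_Kz hne
    rw [hK] at h1
    exact h1
  · rw [if_neg hi]
    have h1 := zeck_of_ne hne (by rw [hK]; exact hi)
    rw [hK, Nat.add_sub_cancel_left] at h1
    exact h1

lemma zeck_add {c : ℕ} : ∀ A {M : ℕ}, (∀ i, i ≤ c → zeck A i = 0) → M < fibF c →
    ∀ i, zeck (A + M) i = if i < c then zeck M i else zeck A i := by
  intro A
  induction A using Nat.strong_induction_on with
  | _ A ih =>
    intro M hA hM i
    rcases Nat.eq_zero_or_pos c with rfl | hc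
    · have hM0 : M = 0 := by
        have : fibF 0 = 1 := rfl
        omega
      subst hM0
      simp
    rcases eq_or_ne A 0 with rfl | hA0
    · rw [zero_add]
      split
      · rfl
      · rename_i h
        push_neg at h
        rw [zeck_zero, zeck_of_fibF_gt M i (lt_of_lt_of_le hM (fibF_mono h))]
    · have hκc : c < Kz A := by
        by_contra h
        push_neg at h
        exact absurd (zeck_Kz hA0) (by rw [hA _ h]; omega)
      obtain ⟨u, hu⟩ : ∃ u, Kz A = u + 1 := ⟨Kz A - 1, by omega⟩
      have hfle : fibF (u+1) ≤ A := by have := fibF_Kz_le hA0; rwa [hu] at this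
      have h2 : A < fibF (u+2) := by have := lt_fibF_Kz_succ A; rwa [hu] at this
      have hA'lt : A - fibF (u+1) < fibF u := by rw [fibF_add] at h2; omega
      have hAeq : A = fibF (u+1) + (A - fibF (u+1)) := by omega
      have hsub : ∀ j, j ≠ u + 1 → zeck A j = zeck (A - fibF (u+1)) j := by
        intro j hj
        have := zeck_of_ne hA0 (i := j) (by omega)
        rw [hu] at this
        exact this
      have hA' : ∀ i, i ≤ c → zeck (A - fibF (u+1)) i = 0 := by
        intro i hi
        rw [← hsub i (by omega)]
        exact hA _ hi
      have hIH := ih (A - fibF (u+1)) (by have := fibF_pos (u+1); omega) hA' hM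
      have hbound : A - fibF (u+1) + M < fibF u := by
        obtain ⟨d, hd⟩ : ∃ d, u = d + 1 := ⟨u - 1, by omega⟩
        have h6 : A - fibF (u+1) + M < fibF (d+1) := by
          apply lt_fibF_of_digits
          intro i hi
          rw [hIH i, if_neg (by omega)]
          exact zeck_of_fibF_gt _ i (lt_of_lt_of_le hA'lt (fibF_mono (by omega)))
        exact lt_of_lt_of_le h6 (le_of_eq (by rw [hd]))
      have hL : zeck (A + M) i = if i = u+1 then 1 else zeck (A - fibF (u+1) + M) i := by
        conv_lhs => rw [hAeq, add_assoc]
        exact zeck_fib_add hbound i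
      by_cases hiu : i = u + 1
      · rw [hL, if_pos hiu, if_neg (by omega), hiu]
        have h3 := zeck_Kz hA0
        rw [hu] at h3
        rw [h3]
      · rw [hL, if_neg hiu, hIH i]
        split
        · rfl
        · rw [hsub i hiu]
lemma zeck_fib_sub_one : ∀ t, ∀ i, zeck (fibF t - 1) i =
    if i < t ∧ i % 2 = (t+1) % 2 then 1 else 0
  | 0 => by
      intro i
      rw [(by rfl : fibF 0 - 1 = 0), zeck_zero, if_neg (by omega)]
  | 1 => by
      intro i
      have h1 : fibF 1 - 1 = 1 := rfl
      have hK : Kz 1 = 0 := Kz_eq (by rfl : fibF 0 ≤ 1) (by rw [(rfl : fibF 1 = 2)]; omega)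
      rw [h1]
      by_cases hi : i = 0
      · rw [hi, if_pos (by omega)]
        have := zeck_Kz (N := 1) (by omega)
        rwa [hK] at this
      · rw [if_neg (by omega)]
        have := zeck_of_ne (N := 1) (i := i) (by omega) (by rw [hK]; exact hi)
        have h0 : (1 : ℕ) - fibF 0 = 0 := rfl
        rw [hK, h0, zeck_zero] at this
        exact this
  | (u+2) => by
      intro i
      have hM : fibF u - 1 < fibF u := Nat.sub_lt (fibF_pos u) one_pos
      have he : fibF (u+2) - 1 = fibF (u+1) + (fibF u - 1) := by
        rw [fibF_add]; have := fibF_pos u; omega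
      rw [he, zeck_fib_add hM i]
      by_cases hi : i = u+1
      · rw [if_pos hi, if_pos (by omega)]
      · rw [if_neg hi, zeck_fib_sub_one u i]
        by_cases h2 : i < u ∧ i % 2 = (u+1) % 2
        · rw [if_pos h2, if_pos (by omega)]
        · rw [if_neg h2, if_neg (by omega)]

lemma struct_ex : ∀ N, 1 ≤ N → ∃ t A, N + 1 = A + fibF t ∧
    (∀ i, i < t + 2 → zeck A i = 0) ∧ (A = 0 → 1 ≤ t) := by
  intro N
  induction N using Nat.strong_induction_on with
  | _ N ih =>
    intro hN1
    have hN : N ≠ 0 := by omega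
    have hfle := fibF_Kz_le hN
    have hlt := lt_fibF_Kz_succ N
    rcases eq_or_ne (N - fibF (Kz N)) 0 with h0 | h0
    · -- N = fibF (Kz N)
      have hNeq : N = fibF (Kz N) := by omega
      match hκ : Kz N with
      | 0 =>
        refine ⟨1, 0, ?_, fun i _ => zeck_zero i, fun _ => le_refl 1⟩
        rw [hκ] at hNeq
        have e0 : fibF 0 = 1 := rfl
        have e1 : fibF 1 = 2 := rfl
        omega
      | 1 =>
        refine ⟨2, 0, ?_, fun i _ => zeck_zero i, fun _ => by omega⟩
        rw [hκ] at hNeq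
        have e1 : fibF 1 = 2 := rfl
        have e2 : fibF 2 = 3 := rfl
        omega
      | (k+2) =>
        rw [hκ] at hNeq
        refine ⟨0, N, by have e0 : fibF 0 = 1 := rfl; omega, ?_, fun h => absurd h hN⟩
        intro i hi
        have hz := zeck_fib_add (k := k+1) (M := 0) (fibF_pos (k+1)) i
        rw [add_zero] at hz
        rw [hNeq, hz, if_neg (by omega), zeck_zero]
    · -- N - fibF (Kz N) ≥ 1
      obtain ⟨t, A', hsum, hdig, hA0⟩ :=
        ih (N - fibF (Kz N)) (by have := fibF_pos (Kz N); omega) (by omega)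
      have hκ2 : 2 ≤ Kz N := by
        by_contra h
        push_neg at h
        have h01 : Kz N = 0 ∨ Kz N = 1 := by omega
        rcases h01 with h' | h'
        · rw [h'] at hfle hlt h0
          have e0 : fibF 0 = 1 := rfl
          have e1 : fibF (0+1) = 2 := rfl
          omega
        · rw [h'] at hfle hlt h0
          have e1 : fibF 1 = 2 := rfl
          have e2 : fibF (1+1) = 3 := rfl
          omega
      obtain ⟨k, hk⟩ : ∃ k, Kz N = k + 2 := ⟨Kz N - 2, by omega⟩
      rw [hk] at hfle hlt h0 hsum
      have hN'lt : N - fibF (k+2) < fibF (k+1) := by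
        rw [(by rw [fibF_add] : fibF (k+2+1) = fibF (k+2) + fibF (k+1))] at hlt
        omega
      rcases eq_or_ne A' 0 with rfl | hA'0
      · have ht1 : 1 ≤ t := hA0 rfl
        rw [zero_add] at hsum
        have htk : t ≤ k+1 := by
          have : fibF t ≤ fibF (k+1) := by omega
          exact fibF_strictMono.le_iff_le.mp this
        rcases eq_or_lt_of_le htk with rfl | htk'
        · refine ⟨k+3, 0, ?_, fun i _ => zeck_zero i, fun _ => by omega⟩
          rw [zero_add, (by rw [fibF_add] : fibF (k+3) = fibF (k+2) + fibF (k+1))]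
          omega
        · refine ⟨t, fibF (k+2), by omega, ?_, by have := fibF_pos (k+2); omega⟩
          intro i hi
          have hz := zeck_fib_add (k := k+1) (M := 0) (fibF_pos (k+1)) i
          rw [add_zero] at hz
          rw [hz, if_neg (by omega), zeck_zero]
      · -- A' ≥ 1
        have hA'le : A' < fibF (k+1) := by have := fibF_pos t; omega
        have hKA' : t + 2 ≤ Kz A' := by
          by_contra h
          push_neg at h
          exact absurd (zeck_Kz hA'0) (by rw [hdig _ (by omega)]; omega)
        have hKA'2 : Kz A' ≤ k := by
          have h1 : fibF (Kz A') ≤ A' := fibF_Kz_le hA'0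
          by_contra h
          push_neg at h
          have := fibF_mono (by omega : k + 1 ≤ Kz A')
          omega
        refine ⟨t, fibF (k+2) + A', by omega, ?_, by have := fibF_pos (k+2); omega⟩
        intro i hi
        rw [zeck_fib_add hA'le i, if_neg (by omega), hdig _ hi]

/-- Digit description of `N` from the normal form. -/
lemma zeck_of_struct {N t A : ℕ} (hsum : N + 1 = A + fibF t)
    (hdig : ∀ i, i < t + 2 → zeck A i = 0) :
    ∀ i, zeck N i = if i < t + 1 then zeck (fibF t - 1) i else zeck A i := by
  have hft := fibF_pos t
  have hNeq : N = A + (fibF t - 1) := by omega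
  have hM : fibF t - 1 < fibF (t+1) := lt_of_le_of_lt (by omega : fibF t - 1 ≤ fibF t)
    (fibF_lt_succ t)
  intro i
  rw [hNeq]
  exact zeck_add A (fun i hi => hdig i (by omega)) hM i

lemma zeck0_of_struct {N t A : ℕ} (hsum : N + 1 = A + fibF t)
    (hdig : ∀ i, i < t + 2 → zeck A i = 0) : zeck N 0 = t % 2 := by
  rw [zeck_of_struct hsum hdig 0, if_pos (by omega), zeck_fib_sub_one t 0]
  split <;> omega

lemma carryLen_of_struct {N t A : ℕ} (hsum : N + 1 = A + fibF t)
    (hdig : ∀ i, i < t + 2 → zeck A i = 0) : carryLen N = t / 2 := by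
  have hz0 := zeck0_of_struct hsum hdig
  have hdigN := zeck_of_struct hsum hdig
  have htop : zeck N (t+1) = 0 := by
    rw [hdigN (t+1), if_neg (by omega), hdig _ (by omega)]
  rcases Nat.even_or_odd t with ⟨s, hs⟩ | ⟨s, hs⟩
  · -- t = s + s
    have hz : zeck N 0 = 0 := by omega
    have hs2 : t / 2 = s := by omega
    unfold carryLen
    rw [if_pos hz, hs2, Nat.find_eq_iff]
    constructor
    · intro hcon
      have e1 : zeck N (2*s+1) = 0 := by
        rw [hdigN (2*s+1), if_neg (by omega)]
        exact hdig _ (by omega)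
      omega
    · intro m hm
      rw [not_not]
      refine ⟨?_, ?_⟩
      · rw [hdigN (2*m+1), if_pos (by omega), zeck_fib_sub_one t (2*m+1),
          if_pos (by omega)]
      · rw [hdigN (2*m), if_pos (by omega), zeck_fib_sub_one t (2*m),
          if_neg (by omega)]
  · -- t = 2*s + 1
    have hz : zeck N 0 = 1 := by omega
    have hs2 : t / 2 = s := by omega
    unfold carryLen
    rw [if_neg (by omega), hs2, Nat.find_eq_iff]
    constructor
    · intro hcon
      have e1 : zeck N (2*s+2) = 0 := by
        rw [hdigN (2*s+2), if_neg (by omega)]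
        exact hdig _ (by omega)
      omega
    · intro m hm
      rw [not_not]
      refine ⟨?_, ?_⟩
      · rw [hdigN (2*m+2), if_pos (by omega), zeck_fib_sub_one t (2*m+2),
          if_pos (by omega)]
      · rw [hdigN (2*m+1), if_pos (by omega), zeck_fib_sub_one t (2*m+1),
          if_neg (by omega)]

lemma Kz_add_of_struct {A t : ℕ} (hA0 : A ≠ 0) (hdig : ∀ i, i < t + 2 → zeck A i = 0)
    {R : ℕ} (hR : R ≤ fibF t) : Kz (A + R) = Kz A := by
  have hKA : t + 2 ≤ Kz A := by
    by_contra h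
    push_neg at h
    exact absurd (zeck_Kz hA0) (by rw [hdig _ (by omega)]; omega)
  have hzadd := zeck_add (c := t+1) A (fun i hi => hdig i (by omega))
    (lt_of_le_of_lt hR (fibF_lt_succ t))
  apply Kz_eq
  · exact le_trans (fibF_Kz_le hA0) (Nat.le_add_right A R)
  · apply lt_fibF_of_digits
    intro i hi
    rw [hzadd i, if_neg (by omega)]
    exact zeck_of_Kz_lt hi

lemma Kz_fib (k : ℕ) : Kz (fibF k) = k := Kz_eq le_rfl (fibF_lt_succ k)

lemma Kz_fib_sub_one {t : ℕ} (ht : 1 ≤ t) : Kz (fibF t - 1) = t - 1 := by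
  obtain ⟨r, rfl⟩ : ∃ r, t = r + 1 := ⟨t - 1, by omega⟩
  have h1 := fibF_lt_succ r
  have h2 := fibF_pos (r+1)
  have := Kz_eq (k := r) (N := fibF (r+1) - 1) (by omega) (by omega)
  omega

lemma Kz_fib_sub {j t : ℕ} (h : j + 2 ≤ t) : Kz (fibF t - fibF j) = t - 1 := by
  obtain ⟨r, rfl⟩ : ∃ r, t = r + 2 := ⟨t - 2, by omega⟩
  have h1 : fibF (r+2) = fibF (r+1) + fibF r := fibF_add r
  have h2 : fibF j ≤ fibF r := fibF_mono (by omega)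
  have h3 := fibF_pos j
  have h4 : fibF (r+1+1) = fibF (r+2) := rfl
  have := Kz_eq (k := r+1) (N := fibF (r+2) - fibF j) (by omega) (by omega)
  omega
noncomputable def piP (p : ℕ → ℝ) (k : ℕ) : ℝ := ∏ j ∈ Finset.Icc 1 k, p ((j+1)/2 + 1)

section algebra

variable {p : ℕ → ℝ} (hp : ∀ i, 1 ≤ i → 0 < p i ∧ p i ≤ 1)

lemma Pprod_zero : Pprod p 0 = 1 := by simp [Pprod]

lemma Pprod_succ (t : ℕ) : Pprod p (t+1) = Pprod p t * p (t+1) :=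
  Finset.prod_Icc_succ_top (by omega) _

lemma Pprod_one : Pprod p 1 = p 1 := by rw [(rfl : (1:ℕ) = 0 + 1), Pprod_succ, Pprod_zero, one_mul]

include hp

lemma Pprod_pos (t : ℕ) : 0 < Pprod p t :=
  Finset.prod_pos fun i hi => (hp i (Finset.mem_Icc.mp hi).1).1

lemma Pprod_le_one (t : ℕ) : Pprod p t ≤ 1 :=
  Finset.prod_le_one (fun i hi => le_of_lt (hp i (Finset.mem_Icc.mp hi).1).1)
    (fun i hi => (hp i (Finset.mem_Icc.mp hi).1).2)

omit hp

lemma piP_zero : piP p 0 = 1 := by simp [piP]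

lemma piP_succ (k : ℕ) : piP p (k+1) = piP p k * p ((k+2)/2 + 1) :=
  Finset.prod_Icc_succ_top (by omega) _

lemma piP_odd (s : ℕ) : piP p (2*s+1) = piP p (2*s) * p (s+2) := by
  have h := piP_succ (p := p) (2*s)
  rwa [(by omega : (2*s+2)/2 + 1 = s+2)] at h

lemma piP_even (s : ℕ) : piP p (2*s+2) = piP p (2*s+1) * p (s+2) := by
  have h := piP_succ (p := p) (2*s+1)
  rwa [(by omega : (2*s+1+2)/2 + 1 = s+2)] at h

include hp

lemma piP_pos (k : ℕ) : 0 < piP p k :=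
  Finset.prod_pos fun i hi => (hp _ (by omega)).1

lemma piP_antitone : ∀ {j k : ℕ}, j ≤ k → piP p k ≤ piP p j := by
  intro j k hjk
  induction k with
  | zero => rw [Nat.le_zero.mp hjk]
  | succ k ihk =>
    have h1 : piP p (k+1) ≤ piP p k := by
      rw [piP_succ]
      have hpos := piP_pos hp (p := p) k
      have := hp ((k+2)/2 + 1) (by omega)
      nlinarith
    rcases eq_or_lt_of_le hjk with rfl | h
    · exact le_refl _
    · exact le_trans h1 (ihk (by omega))

lemma piP_le_one (k : ℕ) : piP p k ≤ 1 := by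
  have := piP_antitone hp (Nat.zero_le k)
  rwa [piP_zero] at this

omit hp in
lemma piP_even_eq (k : ℕ) : piP p (2*k) * p 1 ^ 2 = Pprod p (k+1) ^ 2 := by
  induction k with
  | zero => simp [piP_zero, Pprod_one]
  | succ k ihk =>
    have h1 : 2 * (k+1) = 2*k+1+1 := by omega
    rw [h1, (by omega : 2*k+1+1 = 2*k+2), piP_even, piP_odd, Pprod_succ (k+1)]
    ring_nf
    ring_nf at ihk
    nlinarith [ihk]

omit hp in
lemma telescope (s : ℕ) :
    ∑ m ∈ Finset.Icc 1 s, Pprod p m * (1 - p (m+1)) = p 1 - Pprod p (s+1) := by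
  induction s with
  | zero => simp [Pprod_one]
  | succ s ihs =>
    rw [Finset.sum_Icc_succ_top (by omega), ihs, Pprod_succ (s+1), Pprod_succ s]
    ring

end algebra
/-- The part of a row of `S` away from the diagonal, applied to a vector. -/
noncomputable def Br (p : ℕ → ℝ) (v : ℕ → ℝ) (N : ℕ) : ℝ :=
  if zeck N 0 = 0 then
    Pprod p (carryLen N + 1) * v (N+1) +
    ∑ m ∈ Finset.Icc 1 (carryLen N),
      Pprod p m * (1 - p (m+1)) * v (N + 1 - fibF (2*m))
  else
    Pprod p (carryLen N + 2) * v (N+1) +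
    ∑ m ∈ Finset.Icc 1 (carryLen N + 1),
      Pprod p m * (1 - p (m+1)) * v (N + 1 - fibF (2*m-1))

lemma Smat_eq_zero {p : ℕ → ℝ} {N M : ℕ} (h : N + 1 < M) : Smat p N M = 0 := by
  have h1 : ¬(M = N) := by omega
  have h2 : ¬(M = N + 1) := by omega
  have hs0 : ∑ m ∈ Finset.Icc 1 (carryLen N),
      (if M = N + 1 - fibF (2*m) then Pprod p m * (1 - p (m+1)) else 0) = 0 :=
    Finset.sum_eq_zero
      (fun m _ => if_neg (by have := Nat.sub_le (N+1) (fibF (2*m)); omega))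
  have hs1 : ∑ m ∈ Finset.Icc 1 (carryLen N + 1),
      (if M = N + 1 - fibF (2*m-1) then Pprod p m * (1 - p (m+1)) else 0) = 0 :=
    Finset.sum_eq_zero
      (fun m _ => if_neg (by have := Nat.sub_le (N+1) (fibF (2*m-1)); omega))
  unfold Smat
  rw [if_neg h1]
  split
  · rw [hs0]
    norm_num
  · rw [hs1]
    norm_num

lemma sum_indicator {n c : ℕ} (hc : c < n) (a : ℝ) (v : ℕ → ℝ) :
    ∑ M ∈ Finset.range n, (if M = c then a else 0) * v M = a * v c := by
  rw [Finset.sum_eq_single c]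
  · rw [if_pos rfl]
  · intro b _ hb
    rw [if_neg hb, zero_mul]
  · intro hcc
    exact absurd (Finset.mem_range.mpr hc) hcc

lemma row_eval (p : ℕ → ℝ) (v : ℕ → ℝ) (hv0 : v 0 = 0) (N : ℕ) :
    ∑' j : ℕ, Smat p N (j+1) * v (j+1) = (1 - p 1) * v N + Br p v N := by
  have hfin : ∑' j : ℕ, Smat p N (j+1) * v (j+1)
      = ∑ j ∈ Finset.range (N+1), Smat p N (j+1) * v (j+1) := by
    apply tsum_eq_sum
    intro j hj
    rw [Smat_eq_zero (by simp only [Finset.mem_range] at hj; omega), zero_mul]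
  have hshift : ∑ M ∈ Finset.range (N+2), Smat p N M * v M
      = ∑ j ∈ Finset.range (N+1), Smat p N (j+1) * v (j+1) + Smat p N 0 * v 0 :=
    Finset.sum_range_succ' _ (N+1)
  rw [hv0, mul_zero, add_zero] at hshift
  have hmain : ∑ M ∈ Finset.range (N+2), Smat p N M * v M = (1 - p 1) * v N + Br p v N := by
    unfold Smat Br
    by_cases hz : zeck N 0 = 0
    · simp only [if_pos hz]
      have e1 : ∀ M ∈ Finset.range (N+2),
          ((if M = N then 1 - p 1 else 0) +
            ((if M = N + 1 then Pprod p (carryLen N + 1) else 0) +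
              ∑ m ∈ Finset.Icc 1 (carryLen N),
                (if M = N + 1 - fibF (2*m) then Pprod p m * (1 - p (m+1)) else 0))) * v M
          = (if M = N then 1 - p 1 else 0) * v M +
            ((if M = N + 1 then Pprod p (carryLen N + 1) else 0) * v M +
              ∑ m ∈ Finset.Icc 1 (carryLen N),
                (if M = N + 1 - fibF (2*m) then Pprod p m * (1 - p (m+1)) else 0) * v M) := by
        intro M _
        rw [add_mul, add_mul, Finset.sum_mul]
      rw [Finset.sum_congr rfl e1, Finset.sum_add_distrib, Finset.sum_add_distrib,
        sum_indicator (by omega) _ v, sum_indicator (by omega) _ v, Finset.sum_comm]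
      congr 1
      congr 1
      apply Finset.sum_congr rfl
      intro m _
      exact sum_indicator (by have := Nat.sub_le (N+1) (fibF (2*m)); omega) _ v
    · simp only [if_neg hz]
      have e1 : ∀ M ∈ Finset.range (N+2),
          ((if M = N then 1 - p 1 else 0) +
            ((if M = N + 1 then Pprod p (carryLen N + 2) else 0) +
              ∑ m ∈ Finset.Icc 1 (carryLen N + 1),
                (if M = N + 1 - fibF (2*m-1) then Pprod p m * (1 - p (m+1)) else 0))) * v M
          = (if M = N then 1 - p 1 else 0) * v M +
            ((if M = N + 1 then Pprod p (carryLen N + 2) else 0) * v M +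
              ∑ m ∈ Finset.Icc 1 (carryLen N + 1),
                (if M = N + 1 - fibF (2*m-1) then Pprod p m * (1 - p (m+1)) else 0) * v M) := by
        intro M _
        rw [add_mul, add_mul, Finset.sum_mul]
      rw [Finset.sum_congr rfl e1, Finset.sum_add_distrib, Finset.sum_add_distrib,
        sum_indicator (by omega) _ v, sum_indicator (by omega) _ v, Finset.sum_comm]
      congr 1
      congr 1
      apply Finset.sum_congr rfl
      intro m _
      exact sum_indicator (by have := Nat.sub_le (N+1) (fibF (2*m-1)); omega) _ v
  rw [hfin, ← hshift, hmain]
/-- The candidate harmonic vector (up to scaling): `wv p X = (piP p (Kz X))⁻¹`, `wv p 0 = 0`. -/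
noncomputable def wv (p : ℕ → ℝ) (X : ℕ) : ℝ := if X = 0 then 0 else (piP p (Kz X))⁻¹

lemma wv_zero (p : ℕ → ℝ) : wv p 0 = 0 := if_pos rfl

lemma wv_eq {p : ℕ → ℝ} {X : ℕ} (h : X ≠ 0) : wv p X = (piP p (Kz X))⁻¹ := if_neg h

lemma Br_wv {p : ℕ → ℝ} (hp : ∀ i, 1 ≤ i → 0 < p i ∧ p i ≤ 1) {N : ℕ} (hN : 1 ≤ N) :
    Br p (wv p) N = p 1 * wv p N := by
  obtain ⟨t, A, hsum, hdig, hA0⟩ := struct_ex N hN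
  have hz0 := zeck0_of_struct hsum hdig
  have hcar := carryLen_of_struct hsum hdig
  have hft := fibF_pos t
  have hNne : N ≠ 0 := by omega
  rcases eq_or_ne A 0 with rfl | hA
  · -- boundary case: N = fibF t - 1
    rw [zero_add] at hsum
    have ht1 : 1 ≤ t := hA0 rfl
    rcases Nat.even_or_odd t with ⟨s', hs'⟩ | ⟨s', hs'⟩
    · -- t = 2s+2
      obtain ⟨s, rfl⟩ : ∃ s, t = 2*s+2 := ⟨(t-2)/2, by omega⟩
      have hzz : zeck N 0 = 0 := by omega
      have hcar' : carryLen N = s + 1 := by omega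
      have hKN : Kz N = 2*s+1 := by
        rw [show N = fibF (2*s+2) - 1 by omega]
        have := Kz_fib_sub_one (t := 2*s+2) (by omega)
        omega
      have hKN1 : Kz (N+1) = 2*s+2 := by
        rw [show N+1 = fibF (2*s+2) by omega]
        exact Kz_fib (2*s+2)
      unfold Br
      rw [if_pos hzz, hcar', wv_eq (show N+1 ≠ 0 by omega), wv_eq hNne, hKN, hKN1]
      rw [Finset.sum_Icc_succ_top (by omega : 1 ≤ s+1)]
      have htop : N + 1 - fibF (2*(s+1)) = 0 := by
        rw [show 2*(s+1) = 2*s+2 by omega]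
        omega
      rw [htop, wv_zero, mul_zero, add_zero]
      have hsc : ∀ m ∈ Finset.Icc 1 s,
          Pprod p m * (1 - p (m+1)) * wv p (N + 1 - fibF (2*m))
          = Pprod p m * (1 - p (m+1)) * (piP p (2*s+1))⁻¹ := by
        intro m hm
        obtain ⟨hm1, hm2⟩ := Finset.mem_Icc.mp hm
        have hmono : fibF (2*m) < fibF (2*s+2) := fibF_strictMono (by omega)
        have hmpos := fibF_pos (2*m)
        have htar : N + 1 - fibF (2*m) = fibF (2*s+2) - fibF (2*m) := by omega
        have hz : Kz (fibF (2*s+2) - fibF (2*m)) = 2*s+1 := by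
          have := Kz_fib_sub (j := 2*m) (t := 2*s+2) (by omega)
          omega
        rw [htar, wv_eq (by omega), hz]
      rw [Finset.sum_congr rfl hsc, ← Finset.sum_mul, telescope]
      have h1 := piP_pos hp (p := p) (2*s+1)
      have h2 := (hp (s+2) (by omega)).1
      simp only [show s+1+1 = s+2 from rfl]
      rw [piP_even s, Pprod_succ (s+1)]
      simp only [show s+1+1 = s+2 from rfl]
      field_simp
      ring
    · -- t = 2s+1
      obtain ⟨s, rfl⟩ : ∃ s, t = 2*s+1 := ⟨s', by omega⟩
      have hzz : ¬(zeck N 0 = 0) := by omega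
      have hcar' : carryLen N = s := by omega
      have hKN : Kz N = 2*s := by
        rw [show N = fibF (2*s+1) - 1 by omega]
        have := Kz_fib_sub_one (t := 2*s+1) (by omega)
        omega
      have hKN1 : Kz (N+1) = 2*s+1 := by
        rw [show N+1 = fibF (2*s+1) by omega]
        exact Kz_fib (2*s+1)
      unfold Br
      rw [if_neg hzz, hcar', wv_eq (show N+1 ≠ 0 by omega), wv_eq hNne, hKN, hKN1]
      rw [Finset.sum_Icc_succ_top (by omega : 1 ≤ s+1)]
      have htop : N + 1 - fibF (2*(s+1)-1) = 0 := by
        rw [show 2*(s+1)-1 = 2*s+1 by omega]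
        omega
      rw [htop, wv_zero, mul_zero, add_zero]
      have hsc : ∀ m ∈ Finset.Icc 1 s,
          Pprod p m * (1 - p (m+1)) * wv p (N + 1 - fibF (2*m-1))
          = Pprod p m * (1 - p (m+1)) * (piP p (2*s))⁻¹ := by
        intro m hm
        obtain ⟨hm1, hm2⟩ := Finset.mem_Icc.mp hm
        have hmono : fibF (2*m-1) < fibF (2*s+1) := fibF_strictMono (by omega)
        have hmpos := fibF_pos (2*m-1)
        have htar : N + 1 - fibF (2*m-1) = fibF (2*s+1) - fibF (2*m-1) := by omega
        have hz : Kz (fibF (2*s+1) - fibF (2*m-1)) = 2*s := by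
          have := Kz_fib_sub (j := 2*m-1) (t := 2*s+1) (by omega)
          omega
        rw [htar, wv_eq (by omega), hz]
      rw [Finset.sum_congr rfl hsc, ← Finset.sum_mul, telescope]
      have h1 := piP_pos hp (p := p) (2*s)
      have h2 := (hp (s+2) (by omega)).1
      rw [piP_odd s, Pprod_succ (s+1)]
      simp only [show s+1+1 = s+2 from rfl]
      field_simp
      ring
  · -- interior case: A ≠ 0
    have hKz := fun {R} (hR : R ≤ fibF t) => Kz_add_of_struct hA hdig hR
    have hKN : Kz N = Kz A := by
      rw [show N = A + (fibF t - 1) by omega]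
      exact hKz (by omega)
    have hKN1 : Kz (N+1) = Kz A := by
      rw [show N+1 = A + fibF t by omega]
      exact hKz le_rfl
    rcases Nat.even_or_odd t with ⟨s', hs'⟩ | ⟨s', hs'⟩
    · -- t = 2s
      obtain ⟨s, rfl⟩ : ∃ s, t = 2*s := ⟨t/2, by omega⟩
      have hzz : zeck N 0 = 0 := by omega
      have hcar' : carryLen N = s := by omega
      unfold Br
      rw [if_pos hzz, hcar', wv_eq (show N+1 ≠ 0 by omega), wv_eq hNne, hKN, hKN1]
      have hsc : ∀ m ∈ Finset.Icc 1 s,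
          Pprod p m * (1 - p (m+1)) * wv p (N + 1 - fibF (2*m))
          = Pprod p m * (1 - p (m+1)) * (piP p (Kz A))⁻¹ := by
        intro m hm
        obtain ⟨hm1, hm2⟩ := Finset.mem_Icc.mp hm
        have hmono : fibF (2*m) ≤ fibF (2*s) := fibF_mono (by omega)
        have htar : N + 1 - fibF (2*m) = A + (fibF (2*s) - fibF (2*m)) := by omega
        have hz : Kz (A + (fibF (2*s) - fibF (2*m))) = Kz A := hKz (by omega)
        rw [htar, wv_eq (by omega), hz]
      rw [Finset.sum_congr rfl hsc, ← Finset.sum_mul, telescope]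
      ring
    · -- t = 2s+1
      obtain ⟨s, rfl⟩ : ∃ s, t = 2*s+1 := ⟨s', by omega⟩
      have hzz : ¬(zeck N 0 = 0) := by omega
      have hcar' : carryLen N = s := by omega
      unfold Br
      rw [if_neg hzz, hcar', wv_eq (show N+1 ≠ 0 by omega), wv_eq hNne, hKN, hKN1]
      have hsc : ∀ m ∈ Finset.Icc 1 (s+1),
          Pprod p m * (1 - p (m+1)) * wv p (N + 1 - fibF (2*m-1))
          = Pprod p m * (1 - p (m+1)) * (piP p (Kz A))⁻¹ := by
        intro m hm
        obtain ⟨hm1, hm2⟩ := Finset.mem_Icc.mp hm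
        have hmono : fibF (2*m-1) ≤ fibF (2*s+1) := fibF_mono (by omega)
        have htar : N + 1 - fibF (2*m-1) = A + (fibF (2*s+1) - fibF (2*m-1)) := by omega
        have hz : Kz (A + (fibF (2*s+1) - fibF (2*m-1))) = Kz A := hKz (by omega)
        rw [htar, wv_eq (by omega), hz]
      rw [Finset.sum_congr rfl hsc, ← Finset.sum_mul, telescope]
      ring
lemma Kz_one : Kz 1 = 0 := by
  have e0 : fibF 0 = 1 := rfl
  have e1 : fibF (0+1) = 2 := rfl
  exact Kz_eq (by omega) (by omega)

lemma wv_one (p : ℕ → ℝ) : wv p 1 = 1 := by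
  rw [wv_eq one_ne_zero, Kz_one, piP_zero, inv_one]

theorem stmt3' (p : ℕ → ℝ) (hp : ∀ i, 1 ≤ i → 0 < p i ∧ p i ≤ 1) :
    (∃ v : ℕ → ℝ, (∀ i, 1 ≤ i → 0 < v i ∧ v i ≤ 1) ∧
      ∀ i, 1 ≤ i → v i = ∑' j : ℕ, Smat p i (j+1) * v (j+1)) ↔
    0 < ⨅ n : ℕ, ∏ k ∈ Finset.Icc 1 n, p k := by
  have hp1 := (hp 1 le_rfl).1
  constructor
  · rintro ⟨v, hv1, hveq⟩
    classical
    set v' : ℕ → ℝ := fun X => if X = 0 then 0 else v X with hv'def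
    have hv'0 : v' 0 = 0 := by simp [hv'def]
    have hv'one : v' 1 = v 1 := by simp [hv'def]
    have hv'pos : 0 < v' 1 := by rw [hv'one]; exact (hv1 1 le_rfl).1
    have hv'eq : ∀ i, 1 ≤ i → v' i = ∑' j : ℕ, Smat p i (j+1) * v' (j+1) := by
      intro i hi
      have e1 : v' i = v i := by simp [hv'def]; intro h; omega
      have e2 : ∀ j : ℕ, Smat p i (j+1) * v' (j+1) = Smat p i (j+1) * v (j+1) := by
        intro j
        have : v' (j+1) = v (j+1) := by simp [hv'def]
        rw [this]
      rw [e1, tsum_congr e2]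
      exact hveq i hi
    have key : ∀ N, 1 ≤ N → v' N = v' 1 * wv p N := by
      intro N
      induction N using Nat.strong_induction_on with
      | _ N ih =>
        intro hN1
        rcases eq_or_lt_of_le hN1 with h1 | h2
        · rw [← h1, wv_one, mul_one]
        · obtain ⟨M, rfl⟩ : ∃ M, N = M + 1 := ⟨N - 1, by omega⟩
          have hM1 : 1 ≤ M := by omega
          have hIH : ∀ X, X ≤ M → v' X = v' 1 * wv p X := by
            intro X hX
            rcases Nat.eq_zero_or_pos X with rfl | hX1
            · rw [hv'0, wv_zero, mul_zero]
            · exact ih X (by omega) hX1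
          have hvm : v' M = v' 1 * wv p M := hIH M le_rfl
          have hrow := hv'eq M hM1
          rw [row_eval p v' hv'0 M] at hrow
          have hBr : Br p v' M = p 1 * v' M := by linarith
          have hBrw := Br_wv hp hM1
          unfold Br at hBr hBrw
          by_cases hz : zeck M 0 = 0
          · rw [if_pos hz] at hBr hBrw
            have hsc : ∀ m ∈ Finset.Icc 1 (carryLen M),
                Pprod p m * (1 - p (m+1)) * v' (M + 1 - fibF (2*m))
                = v' 1 * (Pprod p m * (1 - p (m+1)) * wv p (M + 1 - fibF (2*m))) := by
              intro m hm
              have hf := fibF_pos (2*m)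
              rw [hIH _ (by omega)]
              ring
            rw [Finset.sum_congr rfl hsc, ← Finset.mul_sum, hvm] at hBr
            have h4 := congrArg (fun x => v' 1 * x) hBrw
            have hC : 0 < Pprod p (carryLen M + 1) := Pprod_pos hp _
            have h5 : Pprod p (carryLen M + 1) * (v' (M+1) - v' 1 * wv p (M+1)) = 0 := by
              linear_combination hBr - h4
            rcases mul_eq_zero.mp h5 with h | h
            · exact absurd h (ne_of_gt hC)
            · linarith
          · rw [if_neg hz] at hBr hBrw
            have hsc : ∀ m ∈ Finset.Icc 1 (carryLen M + 1),
                Pprod p m * (1 - p (m+1)) * v' (M + 1 - fibF (2*m-1))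
                = v' 1 * (Pprod p m * (1 - p (m+1)) * wv p (M + 1 - fibF (2*m-1))) := by
              intro m hm
              have hf := fibF_pos (2*m-1)
              rw [hIH _ (by omega)]
              ring
            rw [Finset.sum_congr rfl hsc, ← Finset.mul_sum, hvm] at hBr
            have h4 := congrArg (fun x => v' 1 * x) hBrw
            have hC : 0 < Pprod p (carryLen M + 2) := Pprod_pos hp _
            have h5 : Pprod p (carryLen M + 2) * (v' (M+1) - v' 1 * wv p (M+1)) = 0 := by
              linear_combination hBr - h4
            rcases mul_eq_zero.mp h5 with h | h
            · exact absurd h (ne_of_gt hC)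
            · linarith
    have hpile : ∀ k, v' 1 ≤ piP p k := by
      intro k
      have hfk : 1 ≤ fibF k := fibF_pos k
      have h1 := key (fibF k) hfk
      have h2 : v' (fibF k) ≤ 1 := by
        have e : v' (fibF k) = v (fibF k) := by simp [hv'def]; intro h; omega
        rw [e]
        exact (hv1 (fibF k) hfk).2
      rw [wv_eq (by omega), Kz_fib] at h1
      have hpos := piP_pos hp (p := p) k
      rw [h1] at h2
      have h3 := mul_le_mul_of_nonneg_right h2 hpos.le
      rwa [one_mul, mul_assoc, inv_mul_cancel₀ hpos.ne', mul_one] at h3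
    have hfinal : ∀ n : ℕ, min 1 (v' 1 * p 1 ^ 2) ≤ Pprod p n := by
      intro n
      match n with
      | 0 => rw [Pprod_zero]; exact min_le_left _ _
      | (k+1) =>
        have h1 := hpile (2*k)
        have he := piP_even_eq (p := p) k
        have hPp := Pprod_pos hp (p := p) (k+1)
        have hPl := Pprod_le_one hp (p := p) (k+1)
        have h6 : v' 1 * p 1 ^ 2 ≤ piP p (2*k) * p 1 ^ 2 :=
          mul_le_mul_of_nonneg_right h1 (sq_nonneg _)
        have h7 : Pprod p (k+1) ^ 2 ≤ Pprod p (k+1) := by nlinarith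
        exact le_trans (min_le_right _ _) (by nlinarith)
    have hle : min 1 (v' 1 * p 1 ^ 2) ≤ ⨅ n : ℕ, ∏ k ∈ Finset.Icc 1 n, p k :=
      le_ciInf hfinal
    have hminpos : 0 < min 1 (v' 1 * p 1 ^ 2) :=
      lt_min one_pos (mul_pos hv'pos (pow_pos hp1 2))
    linarith
  · intro hinf
    set Pinf := ⨅ n : ℕ, ∏ k ∈ Finset.Icc 1 n, p k with hPinf
    have hεle : ∀ n, Pinf ≤ Pprod p n := by
      intro n
      exact ciInf_le ⟨0, by rintro x ⟨m, rfl⟩; exact (Pprod_pos hp m).le⟩ n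
    have hbdd : BddBelow (Set.range (piP p)) :=
      ⟨0, by rintro x ⟨k, rfl⟩; exact (piP_pos hp k).le⟩
    have hcle : ∀ k, (⨅ k : ℕ, piP p k) ≤ piP p k := fun k => ciInf_le hbdd k
    have hcpos : 0 < ⨅ k : ℕ, piP p k := by
      have hδ : ∀ k, Pinf^2 / p 1 ^ 2 ≤ piP p k := by
        intro k
        have h2k : piP p (2*k) ≤ piP p k := piP_antitone hp (by omega)
        have he := piP_even_eq (p := p) k
        have hPk := hεle (k+1)
        have h3 : Pinf ^ 2 / p 1 ^ 2 ≤ piP p (2*k) := by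
          rw [div_le_iff₀ (pow_pos hp1 2)]
          nlinarith
        linarith
      have h8 := le_ciInf hδ
      have h9 : 0 < Pinf^2 / p 1 ^ 2 := by positivity
      linarith
    refine ⟨fun X => (⨅ k : ℕ, piP p k) * wv p X, ?_, ?_⟩
    · intro i hi
      have hine : i ≠ 0 := by omega
      have hpos := piP_pos hp (p := p) (Kz i)
      show 0 < (⨅ k : ℕ, piP p k) * wv p i ∧ (⨅ k : ℕ, piP p k) * wv p i ≤ 1
      rw [wv_eq hine]
      constructor
      · exact mul_pos hcpos (inv_pos.mpr hpos)
      · exact le_trans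
          (mul_le_mul_of_nonneg_right (hcle (Kz i)) (inv_nonneg.mpr hpos.le))
          (le_of_eq (mul_inv_cancel₀ hpos.ne'))
    · intro i hi
      show (⨅ k : ℕ, piP p k) * wv p i
        = ∑' j : ℕ, Smat p i (j+1) * ((⨅ k : ℕ, piP p k) * wv p (j+1))
      have h1 : ∀ j : ℕ, Smat p i (j+1) * ((⨅ k : ℕ, piP p k) * wv p (j+1))
          = (⨅ k : ℕ, piP p k) * (Smat p i (j+1) * wv p (j+1)) := fun j => by ring
      rw [tsum_congr h1, tsum_mul_left, row_eval p (wv p) (wv_zero p) i, Br_wv hp hi]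
      ring

/-- There exists a sequence `v = (v_i)_{i ≥ 1}` with `0 < v i ≤ 1` and
`v i = ∑_{j ≥ 1} S̃ i j * v j` for all `i ≥ 1` (where `S̃` is `S` with first row and
column removed) if and only if `∏_{i=1}^∞ p i > 0` (the infinite product of the
decreasing partial products, i.e. their infimum, is positive).  Equivalently, the Markov
chain is transient iff `∏ p i > 0`. -/
theorem stmt3 (p : ℕ → ℝ) (hp : ∀ i, 1 ≤ i → 0 < p i ∧ p i ≤ 1) :
    (∃ v : ℕ → ℝ, (∀ i, 1 ≤ i → 0 < v i ∧ v i ≤ 1) ∧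
      ∀ i, 1 ≤ i → v i = ∑' j : ℕ, Smat p i (j+1) * v (j+1)) ↔
    0 < ⨅ n : ℕ, ∏ k ∈ Finset.Icc 1 n, p k := by
  exact stmt3' p hp
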